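/- For every real t with 0 < t < 2: (i) W₁(t)²·Y₁(t)²·Y_{1,1}(t) = 1; (ii) V₂(t)·W₂(t)⁴·Y₂(t)²·Y_{1,2}(t) = 1; (iii) V₃(t)²·W₃(t)⁶·Y₃(t)²·Y_{1,3}(t) = 1. (These are the three instances s = 1, 2, 3 of the constraint V_s^{s−1}·W_s^{2s}·Y_s²·Y_{1,s} = 1.) -/

import Mathlib

/-! Göttsche–Kool universal functions of a real variable `t`, with all square
roots the nonnegative real square roots.  The `t`-suffixed versions
(`gkYt`, `gkZt`, `gkSt`) are the sign-flipped functions obtained by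
replacing `√t` with `−√t`. -/

noncomputable def gkY1 (t : ℝ) : ℝ := (1 + t) + Real.sqrt t * Real.sqrt (1 + 3*t/4)
noncomputable def gkYt1 (t : ℝ) : ℝ := (1 + t) - Real.sqrt t * Real.sqrt (1 + 3*t/4)
noncomputable def gkY2 (t : ℝ) : ℝ := Real.sqrt t + Real.sqrt (1 + t)
noncomputable def gkYt2 (t : ℝ) : ℝ := -Real.sqrt t + Real.sqrt (1 + t)
noncomputable def gkY3 (t : ℝ) : ℝ := 1 + Real.sqrt t * Real.sqrt (1 - t/4)
noncomputable def gkYt3 (t : ℝ) : ℝ := 1 - Real.sqrt t * Real.sqrt (1 - t/4)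
noncomputable def gkZ1 (t : ℝ) : ℝ :=
  (1 + 3*t/4 - (1/2) * Real.sqrt t * Real.sqrt (1 + 3*t/4)) / (1 + t/2)
noncomputable def gkZt1 (t : ℝ) : ℝ :=
  (1 + 3*t/4 + (1/2) * Real.sqrt t * Real.sqrt (1 + 3*t/4)) / (1 + t/2)
noncomputable def gkZ2 (t : ℝ) : ℝ := 1 + t - Real.sqrt t * Real.sqrt (1 + t)
noncomputable def gkZt2 (t : ℝ) : ℝ := 1 + t + Real.sqrt t * Real.sqrt (1 + t)
noncomputable def gkZ3 (t : ℝ) : ℝ :=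
  (1 + t/2) * ((1 - t/4)*(1 + t/2)
    - (3/2) * Real.sqrt t * Real.sqrt (1 - t/4) * (1 - t/6)) / (1 - t/2)^3
noncomputable def gkZt3 (t : ℝ) : ℝ :=
  (1 + t/2) * ((1 - t/4)*(1 + t/2)
    + (3/2) * Real.sqrt t * Real.sqrt (1 - t/4) * (1 - t/6)) / (1 - t/2)^3
noncomputable def gkS1 (t : ℝ) : ℝ := -t/2 + Real.sqrt t * Real.sqrt (1 + 3*t/4)
noncomputable def gkSt1 (t : ℝ) : ℝ := -t/2 - Real.sqrt t * Real.sqrt (1 + 3*t/4)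
noncomputable def gkS2 (t : ℝ) : ℝ := -t + Real.sqrt t * Real.sqrt (1 + t)
noncomputable def gkSt2 (t : ℝ) : ℝ := -t - Real.sqrt t * Real.sqrt (1 + t)
noncomputable def gkS3 (t : ℝ) : ℝ :=
  (-(3/2)*t*(1 - t/6) + Real.sqrt t * Real.sqrt (1 - t/4) * (1 + t/2)) / (1 - t/2)
noncomputable def gkSt3 (t : ℝ) : ℝ :=
  (-(3/2)*t*(1 - t/6) - Real.sqrt t * Real.sqrt (1 - t/4) * (1 + t/2)) / (1 - t/2)
noncomputable def gkV2 (t : ℝ) : ℝ := (1 + t)^2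
noncomputable def gkV3 (t : ℝ) : ℝ := (1 + t/2)^3 / (1 - t/2)
noncomputable def gkW1 (t : ℝ) : ℝ := (1 + t/2)⁻¹
noncomputable def gkW2 (t : ℝ) : ℝ := (Real.sqrt (1 + t))⁻¹
noncomputable def gkW3 (t : ℝ) : ℝ := 2 / (2 + t)
noncomputable def gkX1 (t : ℝ) : ℝ :=
  (1 + t/2) ^ (-(3:ℝ)/4) * (1 + 3*t/4) ^ (-(1:ℝ)/2)
noncomputable def gkX2 (t : ℝ) : ℝ := (1 + t) ^ (-(3:ℝ)/2)
noncomputable def gkX3 (t : ℝ) : ℝ :=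
  (1 - t/2) ^ ((3:ℝ)/4) * (1 - t/4) ^ (-(1:ℝ)/2) * (1 + t/2) ^ (-(4:ℝ))

/-- for `0 < t < 2`, the constraint
`V_s^{s−1} W_s^{2s} Y_s² Y_{1,s} = 1` holds for `s = 1, 2, 3`, where
`Y_{1,s} = Ỹ_s / Y_s`. -/
theorem stmt_10 (t : ℝ) (ht0 : 0 < t) (ht2 : t < 2) :
    gkW1 t ^ 2 * gkY1 t ^ 2 * (gkYt1 t / gkY1 t) = 1 ∧
    gkV2 t * gkW2 t ^ 4 * gkY2 t ^ 2 * (gkYt2 t / gkY2 t) = 1 ∧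
    gkV3 t ^ 2 * gkW3 t ^ 6 * gkY3 t ^ 2 * (gkYt3 t / gkY3 t) = 1 := by
  have hst : Real.sqrt t ^ 2 = t := Real.sq_sqrt ht0.le
  have hs1 : Real.sqrt (1 + 3*t/4) ^ 2 = 1 + 3*t/4 := Real.sq_sqrt (by linarith)
  have hs2 : Real.sqrt (1 + t) ^ 2 = 1 + t := Real.sq_sqrt (by linarith)
  have hs3 : Real.sqrt (1 - t/4) ^ 2 = 1 - t/4 := Real.sq_sqrt (by linarith)
  have hstp : 0 < Real.sqrt t := Real.sqrt_pos.mpr ht0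
  have hs1p : 0 < Real.sqrt (1 + 3*t/4) := Real.sqrt_pos.mpr (by linarith)
  have hs2p : 0 < Real.sqrt (1 + t) := Real.sqrt_pos.mpr (by linarith)
  have hs3n : 0 ≤ Real.sqrt (1 - t/4) := Real.sqrt_nonneg _
  have hY1 : (0:ℝ) < gkY1 t := by
    unfold gkY1; positivity
  have hY2 : (0:ℝ) < gkY2 t := by
    unfold gkY2; positivity
  have hY3 : (0:ℝ) < gkY3 t := by
    unfold gkY3; positivity
  have h12 : (0:ℝ) < 1 + t/2 := by linarith
  have h2t : (0:ℝ) < 2 + t := by linarith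
  have hm2 : (0:ℝ) < 1 - t/2 := by linarith
  have key : ∀ y yt : ℝ, 0 < y → y ^ 2 * (yt / y) = y * yt := by
    intro y yt hy; field_simp
  refine ⟨?_, ?_, ?_⟩
  · have hprod : gkY1 t * gkYt1 t = (1 + t/2)^2 := by
      unfold gkY1 gkYt1
      nlinarith [hst, hs1]
    rw [mul_assoc, key _ _ hY1, hprod]
    unfold gkW1
    field_simp
  · have hprod : gkY2 t * gkYt2 t = 1 := by
      unfold gkY2 gkYt2
      nlinarith [hst, hs2]
    have : gkV2 t * gkW2 t ^ 4 * gkY2 t ^ 2 * (gkYt2 t / gkY2 t)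
        = gkV2 t * gkW2 t ^ 4 * (gkY2 t * gkYt2 t) := by
      rw [mul_assoc, key _ _ hY2]
    rw [this, hprod, mul_one]
    unfold gkV2 gkW2
    rw [inv_pow]
    have h4 : Real.sqrt (1 + t) ^ 4 = (1+t)^2 := by
      rw [show Real.sqrt (1 + t) ^ 4 = (Real.sqrt (1 + t) ^ 2) ^ 2 by ring, hs2]
    rw [h4]
    field_simp
  · have hprod : gkY3 t * gkYt3 t = (1 - t/2)^2 := by
      unfold gkY3 gkYt3
      nlinarith [hst, hs3]
    have : gkV3 t ^ 2 * gkW3 t ^ 6 * gkY3 t ^ 2 * (gkYt3 t / gkY3 t)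
        = gkV3 t ^ 2 * gkW3 t ^ 6 * (gkY3 t * gkYt3 t) := by
      rw [mul_assoc, key _ _ hY3]
    rw [this, hprod]
    unfold gkV3 gkW3
    rw [div_pow, div_pow, div_mul_div_comm, div_mul_eq_mul_div,
      div_eq_one_iff_eq (by positivity)]
    ring
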